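/- Let F ∈ ℂ[x,y,z] be a plane cubic of Waring rank 4 and let 𝕏 = {P_1, P_2, P_3, P_4} ⊂ ℙ^2 be a set of four distinct points apolar to F (i.e., the homogeneous ideal I_𝕏 of forms vanishing on 𝕏 is contained in the apolar ideal F^⊥). If 𝕏 contains exactly three collinear points, then F is a cuspidal cubic: there exist linearly independent linear forms N, L, M ∈ ℂ[x,y,z] such that F = N^3 + LM^2. -/

import Mathlib

open MvPolynomial

noncomputable section

/-- The linear form `c₀x₀ + ⋯ + cₙxₙ` with coefficient vector `c`. -/
def lin {σ : Type*} [Fintype σ] (c : σ → ℂ) : MvPolynomial σ ℂ :=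
  ∑ i, C (c i) * X i

/-- `F` admits a Waring decomposition `F = L₁^d + ⋯ + L_r^d`. -/
def HasWaringDecomp {σ : Type*} [Fintype σ] (d : ℕ) (F : MvPolynomial σ ℂ) (r : ℕ) : Prop :=
  ∃ L : Fin r → σ → ℂ, F = ∑ j, lin (L j) ^ d

/-- The Waring rank of `F` (as a form of degree `d`). -/
def waringRank {σ : Type*} [Fintype σ] (d : ℕ) (F : MvPolynomial σ ℂ) : ℕ :=
  sInf {r | HasWaringDecomp d F r}

/-- The linear form with coefficient vector `a` lies in the Waring locus of `F`:
there are linear forms `L₂, …, L_r` with `r = rk F` such that `F` lies in the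
`ℂ`-linear span of `L^d, L₂^d, …, L_r^d`. -/
def InWaringLocus {σ : Type*} [Fintype σ] (d : ℕ) (F : MvPolynomial σ ℂ) (a : σ → ℂ) : Prop :=
  ∃ (c : Fin (waringRank d F) → ℂ) (L : Fin (waringRank d F) → σ → ℂ)
    (j₀ : Fin (waringRank d F)), L j₀ = a ∧ F = ∑ j, c j • lin (L j) ^ d


lemma lin_add {σ : Type*} [Fintype σ] (u v : σ → ℂ) : lin (u + v) = lin u + lin v := by
  simp [lin, map_add, add_mul, Finset.sum_add_distrib]

lemma lin_smul {σ : Type*} [Fintype σ] (t : ℂ) (u : σ → ℂ) : lin (t • u) = C t * lin u := by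
  simp [lin, Finset.mul_sum, mul_assoc]

lemma not_decomp3 (F : MvPolynomial (Fin 3) ℂ) (hrk : waringRank 3 F = 4) :
    ¬ HasWaringDecomp 3 F 3 := by
  intro h
  have h1 : waringRank 3 F ≤ 3 := Nat.sInf_le h
  omega

lemma cube_absorb (t : ℂ) (v : Fin 3 → ℂ) :
    ∃ u : Fin 3 → ℂ, t • lin v ^ 3 = lin u ^ 3 := by
  obtain ⟨γ, hγ⟩ := IsAlgClosed.exists_pow_nat_eq (k := ℂ) t (n := 3) (by norm_num)
  exact ⟨γ • v, by rw [lin_smul, mul_pow, ← map_pow, hγ, ← smul_eq_C_mul]⟩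

set_option maxHeartbeats 3200000 in
/-- a plane cubic of Waring rank 4 admitting an apolar set of four
distinct points of which exactly three are collinear is a cuspidal cubic
`F = N³ + LM²`.  (By the Apolarity Lemma, a set of points is apolar to `F` iff `F` is
a linear combination of the cubes of the corresponding linear forms.) -/
theorem rank_four_cubic_with_three_collinear_apolar_points_is_cusp
    (F : MvPolynomial (Fin 3) ℂ) (hhom : F.IsHomogeneous 3)
    (hrk : waringRank 3 F = 4)
    (p : Fin 4 → Fin 3 → ℂ) (hp0 : ∀ j, p j ≠ 0)
    (hdist : ∀ j k, j ≠ k → ∀ t : ℂ, p j ≠ t • p k)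
    (c : Fin 4 → ℂ) (hapolar : F = ∑ j, c j • lin (p j) ^ 3)
    (w : Fin 3 → ℂ) (hw : w ≠ 0) (j₀ : Fin 4)
    (hline : ∀ j, j ≠ j₀ → ∑ i, w i * p j i = 0)
    (hoff : ∑ i, w i * p j₀ i ≠ 0) :
    ∃ N L M : Fin 3 → ℂ, LinearIndependent ℂ ![N, L, M] ∧
      F = lin N ^ 3 + lin L * lin M ^ 2 := by
  -- all coefficients are nonzero
  have hc : ∀ j, c j ≠ 0 := by
    intro j hj
    apply not_decomp3 F hrk
    have key : ∀ k : Fin 3, ∃ u : Fin 3 → ℂ,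
        c (j.succAbove k) • lin (p (j.succAbove k)) ^ 3 = lin u ^ 3 :=
      fun k => cube_absorb _ _
    choose L hL using key
    refine ⟨L, ?_⟩
    rw [hapolar, Fin.sum_univ_succAbove (fun j => c j • lin (p j) ^ 3) j]
    simp only [hj, zero_smul, zero_add]
    exact Finset.sum_congr rfl fun k _ => hL k
  -- pairwise independence
  have hpair : ∀ j k, j ≠ k → ∀ x y : ℂ, x • p j + y • p k = 0 → x = 0 ∧ y = 0 := by
    intro j k hjk x y hxy
    by_cases hy : y = 0
    · subst hy
      rw [zero_smul, add_zero] at hxy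
      rcases smul_eq_zero.mp hxy with h | h
      · exact ⟨h, rfl⟩
      · exact absurd h (hp0 j)
    · exfalso
      apply hdist k j (Ne.symm hjk) (-(x/y))
      funext i
      have h := congrFun hxy i
      simp only [Pi.add_apply, Pi.smul_apply, smul_eq_mul, Pi.zero_apply] at h ⊢
      field_simp
      linear_combination h
  -- the three collinear points
  have hwq : ∀ k : Fin 3, ∑ i, w i * p (j₀.succAbove k) i = 0 :=
    fun k => hline _ (Fin.succAbove_ne j₀ k)
  have hdet0 : (Matrix.of fun k i => p (j₀.succAbove k) i).det = 0 := by
    rw [← Matrix.exists_mulVec_eq_zero_iff]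
    refine ⟨w, hw, ?_⟩
    funext k
    have h := hwq k
    rw [Fin.sum_univ_three] at h
    simp [Matrix.mulVec, dotProduct, Fin.sum_univ_three]
    linear_combination h
  obtain ⟨g, hg0, hgM⟩ := Matrix.exists_vecMul_eq_zero_iff.mpr hdet0
  have hglin : g 0 • p (j₀.succAbove 0) + g 1 • p (j₀.succAbove 1) + g 2 • p (j₀.succAbove 2) = 0 := by
    funext i
    have h := congrFun hgM i
    simp only [Matrix.vecMul, dotProduct, Fin.sum_univ_three, Matrix.of_apply,
      Pi.zero_apply] at h
    simpa [Pi.add_apply, Pi.smul_apply, smul_eq_mul] using h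
  have hsne : ∀ (a b : Fin 3), a ≠ b → j₀.succAbove a ≠ j₀.succAbove b :=
    fun a b hab => (Fin.succAbove_right_injective (p := j₀)).ne hab
  have hg2 : g 2 ≠ 0 := by
    intro h2
    have h01 : g 0 • p (j₀.succAbove 0) + g 1 • p (j₀.succAbove 1) = 0 := by
      rw [← hglin, h2, zero_smul, add_zero]
    obtain ⟨e0, e1⟩ := hpair _ _ (hsne 0 1 (by decide)) _ _ h01
    apply hg0
    funext k
    fin_cases k <;> simp [e0, e1, h2]
  -- express q2 in terms of q0 q1
  set α : ℂ := -(g 0)/(g 2) with hαdef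
  set β : ℂ := -(g 1)/(g 2) with hβdef
  have hq2 : p (j₀.succAbove 2) = α • p (j₀.succAbove 0) + β • p (j₀.succAbove 1) := by
    funext i
    have h := congrFun hglin i
    simp only [Pi.add_apply, Pi.smul_apply, smul_eq_mul, Pi.zero_apply] at h ⊢
    rw [hαdef, hβdef]
    field_simp
    linear_combination h
  have hα : α ≠ 0 := by
    intro h
    apply hdist (j₀.succAbove 2) (j₀.succAbove 1) (hsne 2 1 (by decide)) β
    rw [hq2, h, zero_smul, zero_add]
  have hβ : β ≠ 0 := by
    intro h
    apply hdist (j₀.succAbove 2) (j₀.succAbove 0) (hsne 2 0 (by decide)) α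
    rw [hq2, h, zero_smul, add_zero]
  -- abbreviations
  set k0 : ℂ := c j₀ with hk0def
  set k1 : ℂ := c (j₀.succAbove 0) with hk1def
  set k2 : ℂ := c (j₀.succAbove 1) with hk2def
  set k3 : ℂ := c (j₀.succAbove 2) with hk3def
  have hk0 : k0 ≠ 0 := hc _
  have hk1 : k1 ≠ 0 := hc _
  have hk2 : k2 ≠ 0 := hc _
  have hk3 : k3 ≠ 0 := hc _
  have hF : F = k0 • lin (p j₀) ^ 3 +
      (k1 • lin (p (j₀.succAbove 0)) ^ 3 + k2 • lin (p (j₀.succAbove 1)) ^ 3 +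
        k3 • lin (p (j₀.succAbove 2)) ^ 3) := by
    rw [hapolar, Fin.sum_univ_succAbove (fun j => c j • lin (p j) ^ 3) j₀, Fin.sum_univ_three]
  have hlin2 : lin (p (j₀.succAbove 2)) =
      C α * lin (p (j₀.succAbove 0)) + C β * lin (p (j₀.succAbove 1)) := by
    rw [hq2, lin_add, lin_smul, lin_smul]
  -- cube root of k0
  obtain ⟨δ, hδ⟩ := IsAlgClosed.exists_pow_nat_eq (k := ℂ) k0 (n := 3) (by norm_num)
  have hδ0 : δ ≠ 0 := by
    intro h
    rw [h] at hδ
    exact hk0 (by simpa using hδ.symm)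
  -- nonvanishing of Hessian corner coefficients
  have hPne : k1*k3*α*β^2 ≠ 0 :=
    mul_ne_zero (mul_ne_zero (mul_ne_zero hk1 hk3) hα) (pow_ne_zero 2 hβ)
  have hRne : k2*k3*α^2*β ≠ 0 :=
    mul_ne_zero (mul_ne_zero (mul_ne_zero hk2 hk3) (pow_ne_zero 2 hα)) hβ
  by_cases hD : (k1*k2 + k1*k3*β^3 + k2*k3*α^3)^2 - 4*(k1*k3*α*β^2)*(k2*k3*α^2*β) = 0
  · -- Case B : double root, cuspidal
    have hQ2 : (k1*k2 + k1*k3*β^3 + k2*k3*α^3)^2 = 4*(k1*k3*α*β^2)*(k2*k3*α^2*β) := by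
      linear_combination hD
    have h4PR : (4:ℂ)*(k1*k3*α*β^2)*(k2*k3*α^2*β) ≠ 0 :=
      mul_ne_zero (mul_ne_zero (by norm_num) hPne) hRne
    have hQne : (k1*k2 + k1*k3*β^3 + k2*k3*α^3) ≠ 0 := by
      intro h
      apply h4PR
      linear_combination (-1 : ℂ) * hQ2 + (k1*k2 + k1*k3*β^3 + k2*k3*α^3) * h
    have hden1 : (4:ℂ)*(k1*k3*α*β^2)^2 ≠ 0 :=
      mul_ne_zero (by norm_num) (pow_ne_zero 2 hPne)
    have hden2 : ((k1*k2 + k1*k3*β^3 + k2*k3*α^3):ℂ)^2 ≠ 0 := pow_ne_zero 2 hQne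
    obtain ⟨l1, hl1⟩ : ∃ t : ℂ, k1 + k3*α^3 = t * (4*(k1*k3*α*β^2)^2) :=
      ⟨(k1 + k3*α^3)/(4*(k1*k3*α*β^2)^2), (div_mul_cancel₀ _ hden1).symm⟩
    obtain ⟨l2, hl2⟩ : ∃ t : ℂ, k2 + k3*β^3 = t * ((k1*k2 + k1*k3*β^3 + k2*k3*α^3)^2) :=
      ⟨(k2 + k3*β^3)/((k1*k2 + k1*k3*β^3 + k2*k3*α^3)^2), (div_mul_cancel₀ _ hden2).symm⟩
    have hdenB : (4:ℂ)*(k1*k3*α*β^2)^2*(k1*k2 + k1*k3*β^3 + k2*k3*α^3)^2 ≠ 0 :=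
      mul_ne_zero hden1 hden2
    have h2cl : (3*k3*α^2*β) * (4*(k1*k3*α*β^2)^2*(k1*k2 + k1*k3*β^3 + k2*k3*α^3)^2) =
        (l1*(4*(k1*k3*α*β^2)*(k1*k2 + k1*k3*β^3 + k2*k3*α^3)) + l2*(4*(k1*k3*α*β^2)^2)) *
          (4*(k1*k3*α*β^2)^2*(k1*k2 + k1*k3*β^3 + k2*k3*α^3)^2) := by
      linear_combination
        ((-4)*k1*k2*k3^3*α^7*β^2 + (-8)*k1^2*k3^3*α^4*β^5 + (-8)*k1^2*k2*k3^2*α^4*β^2 +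
          (-4)*k1^3*k3^2*α*β^5 + (-4)*k1^3*k2*k3*α*β^2) * hD +
        (4*(k1*k3*α*β^2)*(k1*k2 + k1*k3*β^3 + k2*k3*α^3)^3) * hl1 +
        (16*(k1*k3*α*β^2)^4) * hl2
    have h2 : (3*k3*α^2*β) =
        l1*(4*(k1*k3*α*β^2)*(k1*k2 + k1*k3*β^3 + k2*k3*α^3)) + l2*(4*(k1*k3*α*β^2)^2) :=
      mul_right_cancel₀ hdenB h2cl
    have h3cl : (3*k3*α*β^2) * (4*(k1*k3*α*β^2)^2*(k1*k2 + k1*k3*β^3 + k2*k3*α^3)^2) =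
        (l1*((k1*k2 + k1*k3*β^3 + k2*k3*α^3)^2) + l2*(4*(k1*k3*α*β^2)*(k1*k2 + k1*k3*β^3 + k2*k3*α^3))) *
          (4*(k1*k3*α*β^2)^2*(k1*k2 + k1*k3*β^3 + k2*k3*α^3)^2) := by
      linear_combination
        ((-1)*k2^2*k3^3*α^9 + (-6)*k1*k2*k3^3*α^6*β^3 + (-3)*k1*k2^2*k3^2*α^6 +
          (-5)*k1^2*k3^3*α^3*β^6 + (-8)*k1^2*k2*k3^2*α^3*β^3 + (-3)*k1^2*k2^2*k3*α^3 +
          (-1)*k1^3*k3^2*β^6 + (-2)*k1^3*k2*k3*β^3 + (-1)*k1^3*k2^2) * hD +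
        ((k1*k2 + k1*k3*β^3 + k2*k3*α^3)^4) * hl1 +
        (16*(k1*k3*α*β^2)^3*(k1*k2 + k1*k3*β^3 + k2*k3*α^3)) * hl2
    have h3 : (3*k3*α*β^2) =
        l1*((k1*k2 + k1*k3*β^3 + k2*k3*α^3)^2) + l2*(4*(k1*k3*α*β^2)*(k1*k2 + k1*k3*β^3 + k2*k3*α^3)) :=
      mul_right_cancel₀ hdenB h3cl
    -- determinant of the (L, M) coefficient matrix is nonzero
    have hdet : l1*(k1*k2 + k1*k3*β^3 + k2*k3*α^3) - l2*(2*(k1*k3*α*β^2)) ≠ 0 := by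
      intro h0
      have hb6 : 3*k3*α^2*β = 6*(k1*k3*α*β^2)*(k1*k2 + k1*k3*β^3 + k2*k3*α^3)*l1 := by
        linear_combination h2 - 2*(k1*k3*α*β^2)*h0
      have hc3' : 3*k3*α*β^2 = 3*(k1*k2 + k1*k3*β^3 + k2*k3*α^3)^2*l1 := by
        linear_combination h3 - 2*(k1*k2 + k1*k3*β^3 + k2*k3*α^3)*h0
      apply hPne
      have h9 : (9:ℂ)*(k1*k3*α*β^2) = 0 := by
        linear_combination 3*(3*k3*α*β^2)*hl1 + 12*(k1*k3*α*β^2)^2*l1*hc3' -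
          (3*k3*α^2*β + 6*(k1*k3*α*β^2)*(k1*k2 + k1*k3*β^3 + k2*k3*α^3)*l1)*hb6
      linear_combination (1/9 : ℂ) * h9
    refine ⟨δ • p j₀,
      l1 • p (j₀.succAbove 0) + l2 • p (j₀.succAbove 1),
      (2*(k1*k3*α*β^2)) • p (j₀.succAbove 0) + (k1*k2 + k1*k3*β^3 + k2*k3*α^3) • p (j₀.succAbove 1),
      ?_, ?_⟩
    · -- linear independence
      rw [Fintype.linearIndependent_iff]
      intro g' hg'
      rw [Fin.sum_univ_three] at hg'
      simp only [Matrix.cons_val_zero, Matrix.cons_val_one, Matrix.head_cons,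
        Matrix.cons_val_two, Matrix.tail_cons] at hg'
      have hpt : ∀ i, g' 0 * (δ * p j₀ i) +
          (g' 1 * l1 + g' 2 * (2*(k1*k3*α*β^2))) * p (j₀.succAbove 0) i +
          (g' 1 * l2 + g' 2 * (k1*k2 + k1*k3*β^3 + k2*k3*α^3)) * p (j₀.succAbove 1) i = 0 := by
        intro i
        have h := congrFun hg' i
        simp only [Pi.add_apply, Pi.smul_apply, smul_eq_mul, Pi.zero_apply] at h
        linear_combination h
      have hw0 := hwq 0
      have hw1 := hwq 1
      rw [Fin.sum_univ_three] at hw0 hw1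
      have hoff3 : w 0 * p j₀ 0 + w 1 * p j₀ 1 + w 2 * p j₀ 2 ≠ 0 := by
        rw [Fin.sum_univ_three] at hoff; exact hoff
      have hkey : g' 0 * δ * (w 0 * p j₀ 0 + w 1 * p j₀ 1 + w 2 * p j₀ 2) = 0 := by
        linear_combination (w 0) * hpt 0 + (w 1) * hpt 1 + (w 2) * hpt 2 +
          (-(g' 1 * l1 + g' 2 * (2*(k1*k3*α*β^2)))) * hw0 +
          (-(g' 1 * l2 + g' 2 * (k1*k2 + k1*k3*β^3 + k2*k3*α^3))) * hw1
      have hg'0 : g' 0 = 0 := by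
        rcases mul_eq_zero.mp hkey with h | h
        · rcases mul_eq_zero.mp h with h' | h'
          · exact h'
          · exact absurd h' hδ0
        · exact absurd h hoff3
      have hcomb : (g' 1 * l1 + g' 2 * (2*(k1*k3*α*β^2))) • p (j₀.succAbove 0) +
          (g' 1 * l2 + g' 2 * (k1*k2 + k1*k3*β^3 + k2*k3*α^3)) • p (j₀.succAbove 1) = 0 := by
        funext i
        have h := hpt i
        simp only [Pi.add_apply, Pi.smul_apply, smul_eq_mul, Pi.zero_apply]
        linear_combination h - (δ * p j₀ i) * hg'0
      obtain ⟨hX, hY⟩ := hpair _ _ (hsne 0 1 (by decide)) _ _ hcomb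
      have hg'2 : g' 2 = 0 := by
        have hz : g' 2 * (l1*(k1*k2 + k1*k3*β^3 + k2*k3*α^3) - l2*(2*(k1*k3*α*β^2))) = 0 := by
          linear_combination l1*hY - l2*hX
        exact (mul_eq_zero.mp hz).resolve_right hdet
      have hg'1 : g' 1 = 0 := by
        have hz : g' 1 * (l1*(k1*k2 + k1*k3*β^3 + k2*k3*α^3) - l2*(2*(k1*k3*α*β^2))) = 0 := by
          linear_combination (k1*k2 + k1*k3*β^3 + k2*k3*α^3)*hX - 2*(k1*k3*α*β^2)*hY
        exact (mul_eq_zero.mp hz).resolve_right hdet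
      intro i
      fin_cases i
      · exact hg'0
      · exact hg'1
      · exact hg'2
    · -- the identity F = N³ + L·M²
      rw [hF, hlin2, lin_smul, lin_add, lin_smul, lin_smul, lin_add, lin_smul, lin_smul]
      have Hδ : (C k0 : MvPolynomial (Fin 3) ℂ) = C δ ^ 3 := by rw [← hδ, map_pow]
      have H1 := congrArg (C : ℂ → MvPolynomial (Fin 3) ℂ) hl1
      have H2 := congrArg (C : ℂ → MvPolynomial (Fin 3) ℂ) h2
      have H3 := congrArg (C : ℂ → MvPolynomial (Fin 3) ℂ) h3
      have H4 := congrArg (C : ℂ → MvPolynomial (Fin 3) ℂ) hl2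
      simp only [map_add, map_mul, map_pow, map_ofNat] at H1 H2 H3 H4
      simp only [smul_eq_C_mul, map_add, map_mul, map_pow, map_ofNat]
      linear_combination (lin (p j₀))^3 * Hδ + (lin (p (j₀.succAbove 0)))^3 * H1 +
        (lin (p (j₀.succAbove 0)))^2 * (lin (p (j₀.succAbove 1))) * H2 +
        (lin (p (j₀.succAbove 0))) * (lin (p (j₀.succAbove 1)))^2 * H3 +
        (lin (p (j₀.succAbove 1)))^3 * H4
  · -- Case A : distinct roots, rank ≤ 3, contradiction
    exfalso
    obtain ⟨θ, hθ⟩ := IsAlgClosed.exists_pow_nat_eq (k := ℂ)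
      ((k1*k2 + k1*k3*β^3 + k2*k3*α^3)^2 - 4*(k1*k3*α*β^2)*(k2*k3*α^2*β)) (n := 2) (by norm_num)
    have hθ0 : θ ≠ 0 := by
      intro h
      rw [h] at hθ
      exact hD (by simpa using hθ.symm)
    obtain ⟨u, v, hu1, hu2⟩ : ∃ u v : ℂ,
        (k1 + k3*α^3 = 8*(k1*k3*α*β^2)^3*(u+v)) ∧
        (3*k3*α^2*β = 12*(k1*k3*α*β^2)^2*
          (((k1*k2 + k1*k3*β^3 + k2*k3*α^3) - θ)*u + ((k1*k2 + k1*k3*β^3 + k2*k3*α^3) + θ)*v)) := by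
      refine ⟨(3*(k1 + k3*α^3)*θ + 3*(k1 + k3*α^3)*(k1*k2 + k1*k3*β^3 + k2*k3*α^3) -
                2*(k1*k3*α*β^2)*(3*k3*α^2*β))/(48*(k1*k3*α*β^2)^3*θ),
              (3*(k1 + k3*α^3)*θ - 3*(k1 + k3*α^3)*(k1*k2 + k1*k3*β^3 + k2*k3*α^3) +
                2*(k1*k3*α*β^2)*(3*k3*α^2*β))/(48*(k1*k3*α*β^2)^3*θ), ?_, ?_⟩
      · field_simp
        ring
      · field_simp
        ring
    have hden4 : (4:ℂ)*(k1*k3*α*β^2)^2 ≠ 0 := mul_ne_zero (by norm_num) (pow_ne_zero 2 hPne)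
    have hden24 : (24:ℂ)*(k1*k3*α*β^2)^3 ≠ 0 := mul_ne_zero (by norm_num) (pow_ne_zero 3 hPne)
    have hA3cl : (3*k3*α*β^2) * (4*(k1*k3*α*β^2)^2) =
        (6*(k1*k3*α*β^2)*(((k1*k2 + k1*k3*β^3 + k2*k3*α^3) - θ)^2*u +
          ((k1*k2 + k1*k3*β^3 + k2*k3*α^3) + θ)^2*v)) * (4*(k1*k3*α*β^2)^2) := by
      linear_combination (3*θ^2 - 3*(k1*k2 + k1*k3*β^3 + k2*k3*α^3)^2)*hu1 +
        (4*(k1*k3*α*β^2)*(k1*k2 + k1*k3*β^3 + k2*k3*α^3))*hu2 +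
        (-(3*(k1 + k3*α^3)))*hθ
    have hA3 : (3*k3*α*β^2) =
        6*(k1*k3*α*β^2)*(((k1*k2 + k1*k3*β^3 + k2*k3*α^3) - θ)^2*u +
          ((k1*k2 + k1*k3*β^3 + k2*k3*α^3) + θ)^2*v) :=
      mul_right_cancel₀ hden4 hA3cl
    have hA4cl : (k2 + k3*β^3) * (24*(k1*k3*α*β^2)^3) =
        ((((k1*k2 + k1*k3*β^3 + k2*k3*α^3) - θ)^3*u +
          ((k1*k2 + k1*k3*β^3 + k2*k3*α^3) + θ)^3*v)) * (24*(k1*k3*α*β^2)^3) := by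
      linear_combination (6*(k1*k2 + k1*k3*β^3 + k2*k3*α^3)*θ^2 -
          6*(k1*k2 + k1*k3*β^3 + k2*k3*α^3)^3)*hu1 +
        (2*(k1*k3*α*β^2)*(3*(k1*k2 + k1*k3*β^3 + k2*k3*α^3)^2 + θ^2))*hu2 +
        (-(6*(k1*k2 + k1*k3*β^3 + k2*k3*α^3)*(k1 + k3*α^3) + 2*(k1*k3*α*β^2)*(3*k3*α^2*β)))*hθ
    have hA4 : (k2 + k3*β^3) =
        (((k1*k2 + k1*k3*β^3 + k2*k3*α^3) - θ)^3*u +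
          ((k1*k2 + k1*k3*β^3 + k2*k3*α^3) + θ)^3*v) :=
      mul_right_cancel₀ hden24 hA4cl
    obtain ⟨u', hu'⟩ := IsAlgClosed.exists_pow_nat_eq (k := ℂ) u (n := 3) (by norm_num)
    obtain ⟨v', hv'⟩ := IsAlgClosed.exists_pow_nat_eq (k := ℂ) v (n := 3) (by norm_num)
    apply not_decomp3 F hrk
    refine ⟨![δ • p j₀,
      u' • ((2*(k1*k3*α*β^2)) • p (j₀.succAbove 0) +
        ((k1*k2 + k1*k3*β^3 + k2*k3*α^3) - θ) • p (j₀.succAbove 1)),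
      v' • ((2*(k1*k3*α*β^2)) • p (j₀.succAbove 0) +
        ((k1*k2 + k1*k3*β^3 + k2*k3*α^3) + θ) • p (j₀.succAbove 1))], ?_⟩
    rw [Fin.sum_univ_three]
    simp only [Matrix.cons_val_zero, Matrix.cons_val_one, Matrix.head_cons,
      Matrix.cons_val_two, Matrix.tail_cons]
    rw [hF, hlin2, lin_smul, lin_smul, lin_add, lin_smul, lin_smul,
      lin_smul, lin_add, lin_smul, lin_smul]
    have Hδ : (C k0 : MvPolynomial (Fin 3) ℂ) = C δ ^ 3 := by rw [← hδ, map_pow]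
    have Hu : (C u' : MvPolynomial (Fin 3) ℂ) ^ 3 = C u := by rw [← map_pow, hu']
    have Hv : (C v' : MvPolynomial (Fin 3) ℂ) ^ 3 = C v := by rw [← map_pow, hv']
    have HA1 := congrArg (C : ℂ → MvPolynomial (Fin 3) ℂ) hu1
    have HA2 := congrArg (C : ℂ → MvPolynomial (Fin 3) ℂ) hu2
    have HA3' := congrArg (C : ℂ → MvPolynomial (Fin 3) ℂ) hA3
    have HA4' := congrArg (C : ℂ → MvPolynomial (Fin 3) ℂ) hA4
    simp only [map_add, map_mul, map_pow, map_sub, map_ofNat] at HA1 HA2 HA3' HA4'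
    simp only [smul_eq_C_mul, map_add, map_mul, map_pow, map_sub, map_ofNat]
    linear_combination (lin (p j₀))^3 * Hδ +
      (lin (p (j₀.succAbove 0)))^3 * HA1 +
      (lin (p (j₀.succAbove 0)))^2 * (lin (p (j₀.succAbove 1))) * HA2 +
      (lin (p (j₀.succAbove 0))) * (lin (p (j₀.succAbove 1)))^2 * HA3' +
      (lin (p (j₀.succAbove 1)))^3 * HA4' -
      ((2 : MvPolynomial (Fin 3) ℂ) * (C k1 * C k3 * C α * C β^2) * lin (p (j₀.succAbove 0)) +
        (C k1 * C k2 + C k1 * C k3 * C β^3 + C k2 * C k3 * C α^3 - C θ) * lin (p (j₀.succAbove 1)))^3 * Hu -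
      ((2 : MvPolynomial (Fin 3) ℂ) * (C k1 * C k3 * C α * C β^2) * lin (p (j₀.succAbove 0)) +
        (C k1 * C k2 + C k1 * C k3 * C β^3 + C k2 * C k3 * C α^3 + C θ) * lin (p (j₀.succAbove 1)))^3 * Hv


end
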